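/- Let V, W be closed subspaces of H with H = V ⊕ W⊥, let (W,w) be a fusion frame for W and (V,v) a fusion frame for V. Then the operator T_{V,v}(T*_{W,w} T_{V,v})† T*_{W,w} equals π_{V,W⊥}; consequently (V,v) is a (T*_{W,w}T_{V,v})†-oblique dual fusion frame of (W,w) on V. -/

import Mathlib

set_option synthInstance.maxHeartbeats 1000000 in
set_option maxHeartbeats 2000000 in
/-- Let `V`, `W` be closed subspaces of `H` with `H = V ⊕ Wᗮ`, `(W_i,w_i)` a fusion
frame for `W` and `(V_i,v_i)` a fusion frame for `V` (synthesis operators `T_W`, `T_V`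
with ranges `W`, `V`). If `G` is the Moore–Penrose pseudoinverse of
`T_W* T_V : K_V → K_W`, then `T_V G T_W* = π_{V,Wᗮ}`; i.e. `(V_i,v_i)` is a
`(T_W* T_V)†`-oblique dual fusion frame of `(W_i,w_i)` on `V`. -/
theorem pseudoinverse_gives_oblique_dual
    {H : Type*} [NormedAddCommGroup H] [InnerProductSpace ℂ H] [CompleteSpace H]
    {I : Type*} (V W : Submodule ℂ H) [CompleteSpace V] [CompleteSpace W]
    (hcompl : IsCompl V Wᗮ)
    (Wi Vi : I → Submodule ℂ H) [∀ i, CompleteSpace (Wi i)] [∀ i, CompleteSpace (Vi i)]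
    (hWiW : ∀ i, Wi i ≤ W) (hViV : ∀ i, Vi i ≤ V)
    (w v : I → ℝ) (hw : ∀ i, 0 < w i) (hv : ∀ i, 0 < v i)
    (TW : lp (fun i => Wi i) 2 →L[ℂ] H)
    (hTW : ∀ c, HasSum (fun i => w i • (c i : H)) (TW c))
    (hTWrange : LinearMap.range (TW : lp (fun i => Wi i) 2 →ₗ[ℂ] H) = W)
    (TV : lp (fun i => Vi i) 2 →L[ℂ] H)
    (hTV : ∀ c, HasSum (fun i => v i • (c i : H)) (TV c))
    (hTVrange : LinearMap.range (TV : lp (fun i => Vi i) 2 →ₗ[ℂ] H) = V)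
    (P : H →L[ℂ] H) (hPV : ∀ f ∈ V, P f = f) (hPW : ∀ f ∈ Wᗮ, P f = 0)
    -- `G` is the Moore–Penrose pseudoinverse of `S = T_W* T_V`:
    (G : lp (fun i => Wi i) 2 →L[ℂ] lp (fun i => Vi i) 2)
    (hG1 : ((TW.adjoint.comp TV).comp G).comp (TW.adjoint.comp TV) = TW.adjoint.comp TV)
    (hG2 : (G.comp (TW.adjoint.comp TV)).comp G = G)
    (hG3 : ((TW.adjoint.comp TV).comp G).adjoint = (TW.adjoint.comp TV).comp G)
    (hG4 : (G.comp (TW.adjoint.comp TV)).adjoint = G.comp (TW.adjoint.comp TV)) :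
    ∀ f : H, TV (G (TW.adjoint f)) = P f := by
  -- TW.adjoint vanishes on Wᗮ
  have hadj : ∀ f ∈ Wᗮ, TW.adjoint f = 0 := by
    intro f hf
    have h0 : ∀ c, inner ℂ (TW.adjoint f) c = (0 : ℂ) := by
      intro c
      rw [ContinuousLinearMap.adjoint_inner_left]
      have hWc : TW c ∈ W := hTWrange ▸ LinearMap.mem_range_self TW.toLinearMap c
      exact inner_eq_zero_symm.mp (hf (TW c) hWc)
    have := h0 (TW.adjoint f)
    exact inner_self_eq_zero.mp this
  -- kernel of S is kernel of TV
  have hker : ∀ c, TW.adjoint (TV c) = 0 → TV c = 0 := by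
    intro c hc
    have hV : TV c ∈ V := hTVrange ▸ LinearMap.mem_range_self TV.toLinearMap c
    have hWp : TV c ∈ Wᗮ := by
      intro u hu
      obtain ⟨d, hd⟩ := (hTWrange ▸ hu : u ∈ LinearMap.range (TW : lp (fun i => Wi i) 2 →ₗ[ℂ] H))
      have : inner ℂ d (TW.adjoint (TV c)) = (inner ℂ (TW d) (TV c) : ℂ) :=
        ContinuousLinearMap.adjoint_inner_right TW d (TV c)
      rw [hc, inner_zero_right] at this
      rw [← hd]
      exact this.symm
    exact (Submodule.disjoint_def.mp hcompl.disjoint) _ hV hWp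
  -- On V the composite is the identity
  have honV : ∀ f ∈ V, TV (G (TW.adjoint f)) = f := by
    intro f hf
    obtain ⟨c, hc⟩ := (hTVrange ▸ hf : f ∈ LinearMap.range (TV : lp (fun i => Vi i) 2 →ₗ[ℂ] H))
    have hS : TW.adjoint (TV (G (TW.adjoint (TV c)))) = TW.adjoint (TV c) :=
      congrFun (congrArg DFunLike.coe hG1) c
    have hzero : TW.adjoint (TV (G (TW.adjoint (TV c)) - c)) = 0 := by
      rw [map_sub, map_sub, hS, sub_self]
    have := hker _ hzero
    rw [map_sub, sub_eq_zero] at this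
    rw [← hc]; exact this
  intro f
  obtain ⟨a, b, ha, hb, hab⟩ := Submodule.codisjoint_iff_exists_add_eq.mp hcompl.codisjoint f
  have hb0 : TV (G (TW.adjoint b)) = 0 := by rw [hadj b hb, map_zero, map_zero]
  calc TV (G (TW.adjoint f)) = TV (G (TW.adjoint a)) + TV (G (TW.adjoint b)) := by
        rw [← hab, map_add, map_add, map_add]
    _ = a + 0 := by rw [honV a ha, hb0]
    _ = P a + P b := by rw [hPV a ha, hPW b hb]
    _ = P f := by rw [← map_add, hab]
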